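/- Conditional uniformity of the particle system given its counts (Proposition 'prop-inter'(2)): Fix an integer c ≥ 1, for every l ≥ 1 a finitely supported probability vector p^l on the positive integers, and B(0) ∈ ℕ^c with ∑_{u=1}^c B(0)_u ≥ 1. Let (V_n)_{n∈ℕ} be the Markov chain with kernel κ̂ and initial law μ_{B(0)} (i.e., with law P^{κ̂}_{μ_{B(0)}}). Then for every n ∈ ℕ and every coloring v of any finite length, P(V_n = v) · |C_{Φ(v)}| = P(Φ(V_n) = Φ(v)). Equivalently, for every ℬ ∈ ℕ^c with P(Φ(V_n) = ℬ) > 0, conditional on the event {Φ(V_n) = ℬ} the coloring V_n is uniformly distributed on C_ℬ. -/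

import Mathlib

open Finset MeasureTheory
open scoped ENNReal

/-- The count vector of a coloring `V : {1,…,l} → {1,…,c}`:
`Φ(V)_u = #{i ≤ l : V_i = u}`. -/
def countVec {c l : ℕ} (V : Fin l → Fin c) : Fin c → ℕ :=
  fun u => (Finset.univ.filter fun i => V i = u).card

/-- `C_B`: the finite set of colorings of length `l` with count vector `B`. -/
def colorings {c : ℕ} (l : ℕ) (B : Fin c → ℕ) : Finset (Fin l → Fin c) :=
  Finset.univ.filter fun V => countVec V = B

/-- The rank of position `j` among the positions not in `S'`: `#{i ∉ S' : i < j}`. -/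
def rankInCompl {m : ℕ} (S' : Finset (Fin m)) (j : Fin m) : ℕ :=
  ((S'ᶜ).filter fun i => i < j).card

/-- `σ^u_{S'}(V)`: the coloring of length `m` whose positions in `S'` all carry color
`u` and whose remaining positions carry, in increasing order of position, the colors
`V_1, …, V_l` (meaningful when `l = m - |S'|`). -/
def sigmaIns {c : ℕ} [NeZero c] {m l : ℕ} (u : Fin c) (S' : Finset (Fin m))
    (V : Fin l → Fin c) : Fin m → Fin c := fun j =>
  if j ∈ S' then u
  else if h : rankInCompl S' j < l then V ⟨rankInCompl S' j, h⟩ else default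

/-- `σ(V,S) := σ^u_{S∖{min S}}(V)` where `u = V_{min S}` (meaningful when `V` has
length `l`, `S ⊆ {1,…,l+b}` and `|S| = b+1`, in which case `min S ≤ l`). -/
def sigmaStep {c : ℕ} [NeZero c] {l m : ℕ} (V : Fin l → Fin c)
    (S : Finset (Fin m)) : Fin m → Fin c :=
  if hS : S.Nonempty then
    sigmaIns (if h : ((S.min' hS : Fin m) : ℕ) < l then V ⟨(S.min' hS : Fin m), h⟩
              else default)
      (S.erase (S.min' hS)) V
  else fun _ => default

/-- The countable set of colorings of all finite lengths, a coloring of length `l`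
being a function `{1,…,l} → {1,…,c}`. -/
def Coloring (c : ℕ) : Type := Σ l : ℕ, Fin l → Fin c

instance {c : ℕ} : MeasurableSpace (Coloring c) := ⊤

/-- The particle kernel `κ̂`: from a coloring `V` of length `l`, move to `σ(V,S)` with
probability `p^l(b)/binom(l+b, b+1)`, for each `b ≥ 1` and each `S ⊆ {1,…,l+b}` with
`|S| = b+1`.  Expressed as a transition mass function on `Coloring c`. -/
noncomputable def particleKernel {c : ℕ} [NeZero c] (p : ℕ → ℕ → ℝ≥0∞) :
    Coloring c → Coloring c → ℝ≥0∞ := fun V W =>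
  if V.1 < W.1 then
    (p V.1 (W.1 - V.1) / ((W.1.choose ((W.1 - V.1) + 1) : ℕ) : ℝ≥0∞)) *
      (((Finset.univ.powersetCard ((W.1 - V.1) + 1)).filter
          (fun S : Finset (Fin W.1) => sigmaStep V.2 S = W.2)).card : ℝ≥0∞)
  else 0

/-- The mass function of `μ_B`, the uniform probability measure on `C_B`, viewed on
the set of colorings of all lengths. -/
noncomputable def unifMass {c : ℕ} (B : Fin c → ℕ) : Coloring c → ℝ≥0∞ := fun V =>
  if countVec V.2 = B then (((colorings V.1 B).card : ℝ≥0∞))⁻¹ else 0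

/-- `P` is the law `P^κ_ν` on `E^ℕ` of the Markov chain with initial distribution of
mass function `ν` and transition kernel of mass function `κ` (characterised by its
cylinder probabilities, as produced by the Ionescu–Tulcea construction). -/
def IsChainLaw {E : Type*} [MeasurableSpace E] (P : Measure (ℕ → E))
    (ν : E → ℝ≥0∞) (κ : E → E → ℝ≥0∞) : Prop :=
  IsProbabilityMeasure P ∧
    ∀ (n : ℕ) (v : ℕ → E),
      P {ω | ∀ i ≤ n, ω i = v i} = ν (v 0) * ∏ i ∈ Finset.range n, κ (v i) (v (i + 1))


section Aux


lemma rank_lt_card_compl {m : ℕ} (T : Finset (Fin m)) {j : Fin m} (hj : j ∈ Tᶜ) :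
    rankInCompl T j < Tᶜ.card := by
  have h1 : (Tᶜ.filter fun i => i < j) ⊆ Tᶜ.erase j := by
    intro i hi
    rw [Finset.mem_filter] at hi
    exact Finset.mem_erase.mpr ⟨ne_of_lt hi.2, hi.1⟩
  exact lt_of_le_of_lt (Finset.card_le_card h1) (Finset.card_erase_lt_of_mem hj)

lemma rank_lt_rank {m : ℕ} (T : Finset (Fin m)) {j j' : Fin m} (hj : j ∈ Tᶜ)
    (h : j < j') : rankInCompl T j < rankInCompl T j' := by
  have h1 : insert j (Tᶜ.filter fun i => i < j) ⊆ Tᶜ.filter fun i => i < j' := by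
    intro i hi
    rcases Finset.mem_insert.mp hi with rfl | hi
    · exact Finset.mem_filter.mpr ⟨hj, h⟩
    · rw [Finset.mem_filter] at hi ⊢
      exact ⟨hi.1, hi.2.trans h⟩
  have h2 : j ∉ (Tᶜ.filter fun i => i < j) := by simp
  have := Finset.card_le_card h1
  rw [Finset.card_insert_of_notMem h2] at this
  simp only [rankInCompl]
  omega

lemma rank_injOn {m : ℕ} (T : Finset (Fin m)) {j j' : Fin m} (hj : j ∈ Tᶜ) (hj' : j' ∈ Tᶜ)
    (h : rankInCompl T j = rankInCompl T j') : j = j' := by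
  rcases lt_trichotomy j j' with hlt | heq | hgt
  · exact absurd h (Nat.ne_of_lt (rank_lt_rank T hj hlt))
  · exact heq
  · exact absurd h.symm (Nat.ne_of_lt (rank_lt_rank T hj' hgt))

lemma rank_surj {m : ℕ} (T : Finset (Fin m)) {k : ℕ} (hk : k < Tᶜ.card) :
    ∃ j ∈ Tᶜ, rankInCompl T j = k := by
  have hinj : Set.InjOn (rankInCompl T) ↑(Tᶜ) := fun a ha b hb h =>
    rank_injOn T (Finset.mem_coe.mp ha) (Finset.mem_coe.mp hb) h
  have hcard : (Tᶜ.image (rankInCompl T)).card = Tᶜ.card :=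
    Finset.card_image_of_injOn hinj
  have hsub : Tᶜ.image (rankInCompl T) ⊆ Finset.range Tᶜ.card := by
    intro x hx
    obtain ⟨j, hj, rfl⟩ := Finset.mem_image.mp hx
    exact Finset.mem_range.mpr (rank_lt_card_compl T hj)
  have heq : Tᶜ.image (rankInCompl T) = Finset.range Tᶜ.card :=
    Finset.eq_of_subset_of_card_le hsub (by rw [hcard, Finset.card_range])
  have : k ∈ Tᶜ.image (rankInCompl T) := heq ▸ Finset.mem_range.mpr hk
  obtain ⟨j, hj, hrj⟩ := Finset.mem_image.mp this
  exact ⟨j, hj, hrj⟩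

lemma rank_min {m : ℕ} (S : Finset (Fin m)) (hS : S.Nonempty) :
    rankInCompl (S.erase (S.min' hS)) (S.min' hS) = ((S.min' hS : Fin m) : ℕ) := by
  have h1 : ((S.erase (S.min' hS))ᶜ.filter fun i => i < S.min' hS)
      = Finset.univ.filter fun i => i < S.min' hS := by
    ext i
    simp only [Finset.mem_filter, Finset.mem_compl, Finset.mem_erase, Finset.mem_univ,
      true_and]
    constructor
    · rintro ⟨_, h⟩; exact h
    · intro h
      refine ⟨fun hc => ?_, h⟩
      exact absurd (S.min'_le i hc.2) (not_le.mpr h)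
  rw [rankInCompl, h1]
  rw [show (Finset.univ.filter fun i : Fin m => i < S.min' hS) = Finset.Iio (S.min' hS) by
    ext i; simp]
  exact Fin.card_Iio _ |>.symm ▸ rfl

lemma min_lt {l b m : ℕ} (hm : l + b = m) (S : Finset (Fin m)) (hS : S.Nonempty)
    (hcard : S.card = b + 1) : ((S.min' hS : Fin m) : ℕ) < l := by
  have hsub : S.image Fin.val ⊆ Finset.Ico ((S.min' hS : Fin m) : ℕ) m := by
    intro i hi
    obtain ⟨j, hj, rfl⟩ := Finset.mem_image.mp hi
    exact Finset.mem_Ico.mpr ⟨S.min'_le j hj, j.isLt⟩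
  have h1 : (S.image Fin.val).card = b + 1 := by
    rw [Finset.card_image_of_injective _ Fin.val_injective, hcard]
  have := Finset.card_le_card hsub
  rw [h1, Nat.card_Ico] at this
  omega





variable {c : ℕ} [NeZero c]

lemma sigmaIns_mem {m l : ℕ} (u : Fin c) (T : Finset (Fin m)) (V : Fin l → Fin c)
    {j : Fin m} (hj : j ∈ T) : sigmaIns u T V j = u := by
  simp [sigmaIns, hj]

lemma sigmaIns_not_mem {m l : ℕ} (u : Fin c) (T : Finset (Fin m)) (V : Fin l → Fin c)
    {j : Fin m} (hj : j ∉ T) (h : rankInCompl T j < l) :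
    sigmaIns u T V j = V ⟨rankInCompl T j, h⟩ := by
  simp [sigmaIns, hj, h]

lemma countVec_sigmaIns {m l : ℕ} (u : Fin c) (T : Finset (Fin m)) (V : Fin l → Fin c)
    (hT : Tᶜ.card = l) :
    countVec (sigmaIns u T V) = fun u' => countVec V u' + if u' = u then T.card else 0 := by
  funext u'
  have hsplit : (Finset.univ.filter fun j => sigmaIns u T V j = u')
      = (T.filter fun j => sigmaIns u T V j = u')
        ∪ (Tᶜ.filter fun j => sigmaIns u T V j = u') := by
    rw [← Finset.filter_union, Finset.union_compl]
  have hdisj : Disjoint (T.filter fun j => sigmaIns u T V j = u')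
      (Tᶜ.filter fun j => sigmaIns u T V j = u') :=
    Finset.disjoint_filter_filter disjoint_compl_right
  have hcard1 : (T.filter fun j => sigmaIns u T V j = u').card
      = if u' = u then T.card else 0 := by
    by_cases h : u' = u
    · rw [if_pos h, h, Finset.filter_true_of_mem (fun j hj => sigmaIns_mem u T V hj)]
    · rw [Finset.filter_false_of_mem, if_neg h, Finset.card_empty]
      intro j hj heq
      rw [sigmaIns_mem u T V hj] at heq
      exact h heq.symm
  have hcard2 : (Tᶜ.filter fun j => sigmaIns u T V j = u').card = countVec V u' := by
    apply Finset.card_bij (fun j hj => (⟨rankInCompl T j,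
      hT ▸ rank_lt_card_compl T (Finset.mem_filter.mp hj).1⟩ : Fin l))
    · intro j hj
      have hj1 := (Finset.mem_filter.mp hj).1
      have hj2 := (Finset.mem_filter.mp hj).2
      have hr : rankInCompl T j < l := hT ▸ rank_lt_card_compl T hj1
      rw [sigmaIns_not_mem u T V (Finset.mem_compl.mp hj1) hr] at hj2
      exact Finset.mem_filter.mpr ⟨Finset.mem_univ _, hj2⟩
    · intro j hj j' hj' heq
      exact rank_injOn T (Finset.mem_filter.mp hj).1 (Finset.mem_filter.mp hj').1
        (congrArg Fin.val heq)
    · intro k hk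
      obtain ⟨j, hj, hrj⟩ := rank_surj T (k := (k : ℕ)) (hT ▸ k.isLt)
      have hr : rankInCompl T j < l := hT ▸ rank_lt_card_compl T hj
      refine ⟨j, ?_, ?_⟩
      · refine Finset.mem_filter.mpr ⟨hj, ?_⟩
        rw [sigmaIns_not_mem u T V (Finset.mem_compl.mp hj) hr]
        have : (⟨rankInCompl T j, hr⟩ : Fin l) = k := Fin.ext hrj
        rw [this]
        exact (Finset.mem_filter.mp hk).2
      · exact Fin.ext hrj
  rw [countVec, hsplit, Finset.card_union_of_disjoint hdisj, hcard1, hcard2, Nat.add_comm]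

lemma sigmaIns_injective {m l : ℕ} (u : Fin c) (T : Finset (Fin m))
    {V V' : Fin l → Fin c} (hT : Tᶜ.card = l)
    (h : sigmaIns u T V = sigmaIns u T V') : V = V' := by
  funext k
  obtain ⟨j, hj, hrj⟩ := rank_surj T (k := (k : ℕ)) (hT ▸ k.isLt)
  have hr : rankInCompl T j < l := hT ▸ rank_lt_card_compl T hj
  have h1 := congrFun h j
  rw [sigmaIns_not_mem u T V (Finset.mem_compl.mp hj) hr,
    sigmaIns_not_mem u T V' (Finset.mem_compl.mp hj) hr] at h1
  have : (⟨rankInCompl T j, hr⟩ : Fin l) = k := Fin.ext hrj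
  rwa [this] at h1

lemma sigmaIns_exists {m l : ℕ} (u : Fin c) (T : Finset (Fin m)) (w : Fin m → Fin c)
    (hT : Tᶜ.card = l) (hw : ∀ i ∈ T, w i = u) :
    ∃ V : Fin l → Fin c, sigmaIns u T V = w := by
  classical
  refine ⟨fun k => w (rank_surj T (k := (k : ℕ)) (hT ▸ k.isLt)).choose, ?_⟩
  funext j
  by_cases hj : j ∈ T
  · rw [sigmaIns_mem u T _ hj, hw j hj]
  · have hjc : j ∈ Tᶜ := Finset.mem_compl.mpr hj
    have hr : rankInCompl T j < l := hT ▸ rank_lt_card_compl T hjc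
    rw [sigmaIns_not_mem u T _ hj hr]
    set k : Fin l := ⟨rankInCompl T j, hr⟩
    obtain ⟨hj', hrj'⟩ := (rank_surj T (k := (k : ℕ)) (hT ▸ k.isLt)).choose_spec
    have : (rank_surj T (k := (k : ℕ)) (hT ▸ k.isLt)).choose = j :=
      rank_injOn T hj' hjc hrj'
    rw [this]

lemma sigmaStep_eq {m l : ℕ} (V : Fin l → Fin c) (S : Finset (Fin m)) (hS : S.Nonempty)
    (hlt : ((S.min' hS : Fin m) : ℕ) < l) :
    sigmaStep V S = sigmaIns (V ⟨(S.min' hS : Fin m), hlt⟩) (S.erase (S.min' hS)) V := by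
  rw [sigmaStep, dif_pos hS, dif_pos hlt]

lemma sigmaStep_min {m l : ℕ} (V : Fin l → Fin c) (S : Finset (Fin m)) (hS : S.Nonempty)
    (hlt : ((S.min' hS : Fin m) : ℕ) < l) :
    sigmaStep V S (S.min' hS) = V ⟨(S.min' hS : Fin m), hlt⟩ := by
  rw [sigmaStep_eq V S hS hlt]
  have hnm : S.min' hS ∉ S.erase (S.min' hS) := Finset.notMem_erase _ _
  have hr : rankInCompl (S.erase (S.min' hS)) (S.min' hS) < l := by
    rw [rank_min S hS]; exact hlt
  rw [sigmaIns_not_mem _ _ _ hnm hr]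
  congr 1
  exact Fin.ext (rank_min S hS)

lemma sigmaStep_apply_mem {m l : ℕ} (V : Fin l → Fin c) (S : Finset (Fin m))
    (hS : S.Nonempty) (hlt : ((S.min' hS : Fin m) : ℕ) < l) {i : Fin m} (hi : i ∈ S) :
    sigmaStep V S i = V ⟨(S.min' hS : Fin m), hlt⟩ := by
  by_cases h : i = S.min' hS
  · rw [h]; exact sigmaStep_min V S hS hlt
  · rw [sigmaStep_eq V S hS hlt]
    exact sigmaIns_mem _ _ _ (Finset.mem_erase.mpr ⟨h, hi⟩)

lemma erase_compl_card {l b m : ℕ} (hm : l + b = m) (S : Finset (Fin m)) (hS : S.Nonempty)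
    (hcard : S.card = b + 1) : (S.erase (S.min' hS))ᶜ.card = l := by
  rw [Finset.card_compl, Finset.card_erase_of_mem (S.min'_mem hS), hcard]
  simp only [Fintype.card_fin]
  omega

lemma countVec_sigmaStep {l b m : ℕ} (hm : l + b = m) (V : Fin l → Fin c)
    (S : Finset (Fin m)) (hS : S.Nonempty) (hcard : S.card = b + 1)
    (hlt : ((S.min' hS : Fin m) : ℕ) < l) :
    countVec (sigmaStep V S)
      = fun u' => countVec V u' + if u' = V ⟨(S.min' hS : Fin m), hlt⟩ then b else 0 := by
  rw [sigmaStep_eq V S hS hlt,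
    countVec_sigmaIns _ _ _ (erase_compl_card hm S hS hcard)]
  have : (S.erase (S.min' hS)).card = b := by
    rw [Finset.card_erase_of_mem (S.min'_mem hS), hcard]
    omega
  rw [this]

/-- auxiliary color of a set -/
def mcolor {m : ℕ} (w : Fin m → Fin c) (S : Finset (Fin m)) : Fin c :=
  if h : S.Nonempty then w (S.min' h) else default

lemma key_count {l b m : ℕ} (hm : l + b = m) (hb : 1 ≤ b) (A : Fin c → ℕ)
    (w : Fin m → Fin c) :
    (∑ x ∈ colorings l A, ((Finset.univ.powersetCard (b+1)).filter
        (fun S : Finset (Fin m) => sigmaStep x S = w)).card)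
      = ∑ u : Fin c, if countVec w = (fun u' => A u' + if u' = u then b else 0)
          then Nat.choose (countVec w u) (b+1) else 0 := by
  classical
  -- LHS as a card of a filtered product
  have hLHS : (∑ x ∈ colorings l A, ((Finset.univ.powersetCard (b+1)).filter
        (fun S : Finset (Fin m) => sigmaStep x S = w)).card)
      = (((colorings l A) ×ˢ (Finset.univ.powersetCard (b+1) :
          Finset (Finset (Fin m)))).filter (fun q => sigmaStep q.1 q.2 = w)).card := by
    rw [Finset.card_filter, Finset.sum_product]
    congr 1
    funext x
    rw [Finset.card_filter]
  -- RHS as a card of a sigma finset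
  have hRHS : (∑ u : Fin c, if countVec w = (fun u' => A u' + if u' = u then b else 0)
          then Nat.choose (countVec w u) (b+1) else 0)
      = ((Finset.univ : Finset (Fin c)).sigma (fun u =>
          if countVec w = (fun u' => A u' + if u' = u then b else 0)
          then (Finset.univ.filter fun i => w i = u).powersetCard (b+1) else ∅)).card := by
    rw [Finset.card_sigma]
    congr 1
    funext u
    by_cases h : countVec w = (fun u' => A u' + if u' = u then b else 0)
    · rw [if_pos h, if_pos h, Finset.card_powersetCard]
      rfl
    · rw [if_neg h, if_neg h, Finset.card_empty]
  rw [hLHS, hRHS]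
  apply Finset.card_bij (fun q _ => (⟨mcolor w q.2, q.2⟩ : Σ _ : Fin c, Finset (Fin m)))
  · -- maps to
    rintro ⟨x, S⟩ hq
    rw [Finset.mem_filter, Finset.mem_product] at hq
    obtain ⟨⟨hx, hSmem⟩, hstep⟩ := hq
    dsimp only at hx hSmem hstep ⊢
    rw [colorings, Finset.mem_filter] at hx
    have hx' : countVec x = A := hx.2
    have hScard : S.card = b + 1 := (Finset.mem_powersetCard_univ.mp hSmem)
    have hS : S.Nonempty := Finset.card_pos.mp (by omega)
    have hlt := min_lt hm S hS hScard
    have hux : w (S.min' hS) = x ⟨(S.min' hS : Fin m), hlt⟩ := by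
      rw [← hstep]; exact sigmaStep_min x S hS hlt
    have hmc : mcolor w S = w (S.min' hS) := dif_pos hS
    have hcond : countVec w = fun u' => A u' + if u' = w (S.min' hS) then b else 0 := by
      have h2 := countVec_sigmaStep hm x S hS hScard hlt
      rw [hstep, hx'] at h2
      rw [hux]
      exact h2
    refine Finset.mem_sigma.mpr ⟨Finset.mem_univ _, ?_⟩
    dsimp only
    rw [hmc, if_pos hcond]
    refine Finset.mem_powersetCard.mpr ⟨?_, hScard⟩
    intro i hi
    refine Finset.mem_filter.mpr ⟨Finset.mem_univ _, ?_⟩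
    have hwi : w i = x ⟨(S.min' hS : Fin m), hlt⟩ := by
      rw [← hstep]; exact sigmaStep_apply_mem x S hS hlt hi
    exact hwi.trans hux.symm
  · -- injective
    rintro ⟨x, S⟩ hq ⟨x', S'⟩ hq' heq
    rw [Finset.mem_filter, Finset.mem_product] at hq hq'
    obtain ⟨⟨hx, hSmem⟩, hstep⟩ := hq
    obtain ⟨⟨hx2, hSmem2⟩, hstep2⟩ := hq'
    dsimp only at hx hSmem hstep hx2 hSmem2 hstep2 heq
    have hSS : S = S' := by
      have := (Sigma.mk.inj_iff.mp heq).2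
      exact eq_of_heq this
    subst hSS
    have hScard : S.card = b + 1 := (Finset.mem_powersetCard_univ.mp hSmem)
    have hS : S.Nonempty := Finset.card_pos.mp (by omega)
    have hlt := min_lt hm S hS hScard
    have h1 : x ⟨(S.min' hS : Fin m), hlt⟩ = w (S.min' hS) := by
      rw [← hstep]; exact (sigmaStep_min x S hS hlt).symm
    have h2 : x' ⟨(S.min' hS : Fin m), hlt⟩ = w (S.min' hS) := by
      rw [← hstep2]; exact (sigmaStep_min x' S hS hlt).symm
    have h12 : x ⟨(S.min' hS : Fin m), hlt⟩ = x' ⟨(S.min' hS : Fin m), hlt⟩ :=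
      h1.trans h2.symm
    have hxx : x = x' := by
      apply sigmaIns_injective (x ⟨(S.min' hS : Fin m), hlt⟩) (S.erase (S.min' hS))
        (erase_compl_card hm S hS hScard)
      rw [← sigmaStep_eq x S hS hlt, h12, ← sigmaStep_eq x' S hS hlt, hstep, hstep2]
    rw [hxx]
  · -- surjective
    rintro ⟨u, S⟩ ht
    rw [Finset.mem_sigma] at ht
    obtain ⟨-, hmem⟩ := ht
    dsimp only at hmem
    by_cases hcond : countVec w = (fun u' => A u' + if u' = u then b else 0)
    swap
    · rw [if_neg hcond] at hmem; exact absurd hmem (Finset.notMem_empty S)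
    rw [if_pos hcond, Finset.mem_powersetCard] at hmem
    obtain ⟨hsub, hScard⟩ := hmem
    have hS : S.Nonempty := Finset.card_pos.mp (by omega)
    set j₀ := S.min' hS with hj₀
    have hwS : ∀ i ∈ S, w i = u := by
      intro i hi
      exact (Finset.mem_filter.mp (hsub hi)).2
    have hTc := erase_compl_card hm S hS hScard
    obtain ⟨V, hIns⟩ := sigmaIns_exists u (S.erase j₀) w hTc
      (fun i hi => hwS i (Finset.mem_of_mem_erase hi))
    have hlt := min_lt hm S hS hScard
    have hVj : V ⟨(j₀ : Fin m), hlt⟩ = u := by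
      have hnm : j₀ ∉ S.erase j₀ := Finset.notMem_erase _ _
      have hr : rankInCompl (S.erase j₀) j₀ < l := by
        rw [rank_min S hS]; exact hlt
      have := congrFun hIns j₀
      rw [sigmaIns_not_mem _ _ _ hnm hr] at this
      have hfin : (⟨rankInCompl (S.erase j₀) j₀, hr⟩ : Fin l) = ⟨(j₀ : Fin m), hlt⟩ :=
        Fin.ext (rank_min S hS)
      rw [hfin] at this
      rw [this]
      exact hwS j₀ (S.min'_mem hS)
    have hstep : sigmaStep V S = w := by
      rw [sigmaStep_eq V S hS hlt, hVj]
      exact hIns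
    have hcount : countVec V = A := by
      funext u'
      have h1 := congrFun hcond u'
      have h2 := congrFun (countVec_sigmaStep hm V S hS hScard hlt) u'
      rw [hstep, hVj] at h2
      rw [h2] at h1
      omega
    refine ⟨⟨V, S⟩, ?_, ?_⟩
    · rw [Finset.mem_filter, Finset.mem_product]
      exact ⟨⟨Finset.mem_filter.mpr ⟨Finset.mem_univ _, hcount⟩,
        Finset.mem_powersetCard_univ.mpr hScard⟩, hstep⟩
    · simp only [mcolor, dif_pos hS]
      rw [hwS _ (S.min'_mem hS)]

lemma sum_countVec {l : ℕ} (V : Fin l → Fin c) : ∑ u, countVec V u = l := by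
  classical
  have h := Finset.card_eq_sum_card_fiberwise
    (f := V) (s := Finset.univ) (t := Finset.univ) (fun x _ => Finset.mem_univ _)
  simp only [Finset.card_univ, Fintype.card_fin] at h
  exact h.symm

lemma sum_mul_class {l : ℕ} (f : (Fin l → Fin c) → ℝ≥0∞)
    (hf : ∀ x y : Fin l → Fin c, countVec x = countVec y → f x = f y)
    (g g' : (Fin l → Fin c) → ℕ)
    (hg : ∀ A : Fin c → ℕ, ∑ x ∈ colorings l A, g x = ∑ x ∈ colorings l A, g' x) :
    ∑ x : Fin l → Fin c, f x * (g x : ℝ≥0∞) = ∑ x : Fin l → Fin c, f x * (g' x : ℝ≥0∞) := by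
  classical
  have h1 : ∀ (g : (Fin l → Fin c) → ℕ), ∑ x : Fin l → Fin c, f x * (g x : ℝ≥0∞)
      = ∑ A ∈ Finset.univ.image (countVec (c := c) (l := l)),
          ∑ x ∈ Finset.univ.filter (fun x => countVec x = A), f x * (g x : ℝ≥0∞) := by
    intro g
    exact (Finset.sum_fiberwise_of_maps_to
      (fun x _ => Finset.mem_image_of_mem _ (Finset.mem_univ x)) _).symm
  rw [h1 g, h1 g']
  apply Finset.sum_congr rfl
  intro A hA
  obtain ⟨x₀, -, hx₀⟩ := Finset.mem_image.mp hA
  have e1 : ∀ (g : (Fin l → Fin c) → ℕ),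
      ∑ x ∈ Finset.univ.filter (fun x => countVec x = A), f x * (g x : ℝ≥0∞)
        = f x₀ * ((∑ x ∈ colorings l A, g x : ℕ) : ℝ≥0∞) := by
    intro g
    rw [Nat.cast_sum, Finset.mul_sum]
    apply Finset.sum_congr rfl
    intro x hx
    have hxA : countVec x = A := (Finset.mem_filter.mp hx).2
    rw [hf x x₀ (hxA.trans hx₀.symm)]
  rw [e1 g, e1 g', hg A]

lemma step_const (p : ℕ → ℕ → ℝ≥0∞) (f : Coloring c → ℝ≥0∞)
    (hf : ∀ (l : ℕ) (x y : Fin l → Fin c), countVec x = countVec y →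
      f ⟨l, x⟩ = f ⟨l, y⟩)
    {m' : ℕ} (w w' : Fin m' → Fin c) (hww : countVec w = countVec w') :
    ∑' V : Coloring c, f V * particleKernel p V ⟨m', w⟩
      = ∑' V : Coloring c, f V * particleKernel p V ⟨m', w'⟩ := by
  classical
  have e : ∀ z : Fin m' → Fin c,
      ∑' V : Coloring c, f V * particleKernel p V ⟨m', z⟩
        = ∑' l : ℕ, ∑' x : Fin l → Fin c, f ⟨l, x⟩ * particleKernel p ⟨l, x⟩ ⟨m', z⟩ := by
    intro z
    exact ENNReal.tsum_sigma' _
  rw [e w, e w']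
  apply tsum_congr
  intro l
  rw [tsum_fintype, tsum_fintype]
  by_cases hl : l < m'
  · have hker : ∀ (x : Fin l → Fin c) (z : Fin m' → Fin c),
        particleKernel p ⟨l, x⟩ ⟨m', z⟩
          = (p l (m' - l) / ((m'.choose ((m' - l) + 1) : ℕ) : ℝ≥0∞)) *
            ((((Finset.univ.powersetCard ((m' - l) + 1)).filter
              (fun S : Finset (Fin m') => sigmaStep x S = z)).card : ℕ) : ℝ≥0∞) := by
      intro x z
      simp only [particleKernel, if_pos hl]
    simp only [hker]
    have hrw : ∀ (z : Fin m' → Fin c),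
        ∑ x : Fin l → Fin c, f ⟨l, x⟩ *
          ((p l (m' - l) / ((m'.choose ((m' - l) + 1) : ℕ) : ℝ≥0∞)) *
            ((((Finset.univ.powersetCard ((m' - l) + 1)).filter
              (fun S : Finset (Fin m') => sigmaStep x S = z)).card : ℕ) : ℝ≥0∞))
        = (p l (m' - l) / ((m'.choose ((m' - l) + 1) : ℕ) : ℝ≥0∞)) *
          ∑ x : Fin l → Fin c, f ⟨l, x⟩ *
            ((((Finset.univ.powersetCard ((m' - l) + 1)).filter
              (fun S : Finset (Fin m') => sigmaStep x S = z)).card : ℕ) : ℝ≥0∞) := by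
      intro z
      rw [Finset.mul_sum]
      apply Finset.sum_congr rfl
      intro x _
      ring
    rw [hrw w, hrw w']
    congr 1
    apply sum_mul_class (f := fun x => f ⟨l, x⟩) (hf := fun x y h => hf l x y h)
    intro A
    rw [key_count (by omega : l + (m' - l) = m') (by omega : 1 ≤ m' - l) A w,
      key_count (by omega : l + (m' - l) = m') (by omega : 1 ≤ m' - l) A w', hww]
  · apply Finset.sum_congr rfl
    intro x _
    simp only [particleKernel, if_neg hl, mul_zero]

end Aux


instance {c : ℕ} : Countable (Coloring c) :=
  inferInstanceAs (Countable (Σ l : ℕ, Fin l → Fin c))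

instance {c : ℕ} : MeasurableSingletonClass (Coloring c) :=
  ⟨fun _ => MeasurableSpace.measurableSet_top⟩

section Meas


variable {E : Type*} [MeasurableSpace E] [MeasurableSingletonClass E] [Countable E]
variable {P : Measure (ℕ → E)} {ν : E → ℝ≥0∞} {κ : E → E → ℝ≥0∞}

/-- extension of a finite path by a final value -/
def extPath {E : Type*} (n : ℕ) (g : Fin n → E) (v : E) : ℕ → E :=
  fun i => if h : i < n then g ⟨i, h⟩ else v

lemma extPath_lt {n : ℕ} (g : Fin n → E) (v : E) {i : ℕ} (h : i < n) :
    extPath n g v i = g ⟨i, h⟩ := dif_pos h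

lemma extPath_ge {n : ℕ} (g : Fin n → E) (v : E) {i : ℕ} (h : ¬ i < n) :
    extPath n g v i = v := dif_neg h

lemma extPath_snoc {n : ℕ} (g : Fin n → E) (v w : E) {i : ℕ} (hi : i ≤ n) :
    extPath (n+1) (Fin.snoc g v) w i = extPath n g v i := by
  by_cases h : i < n
  · rw [extPath_lt _ _ (by omega : i < n + 1), extPath_lt _ _ h]
    have he : (⟨i, by omega⟩ : Fin (n+1)) = Fin.castSucc ⟨i, h⟩ := rfl
    rw [he, Fin.snoc_castSucc]
  · have he : (⟨i, by omega⟩ : Fin (n+1)) = Fin.last n := Fin.ext (by simp [Fin.last]; omega)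
    rw [extPath_lt _ _ (by omega : i < n + 1), extPath_ge _ _ h, he, Fin.snoc_last]

/-- the snoc equivalence -/
def snocE (n : ℕ) (E : Type*) : ((Fin n → E) × E) ≃ (Fin (n+1) → E) where
  toFun p := Fin.snoc p.1 p.2
  invFun h := (fun i => h i.castSucc, h (Fin.last n))
  left_inv p := by
    refine Prod.ext ?_ ?_
    · funext i; simp
    · simp
  right_inv h := by
    funext i
    refine Fin.lastCases ?_ ?_ i
    · simp
    · intro j; simp

lemma cyl_measurable (n : ℕ) (f : ℕ → E) :
    MeasurableSet {ω : ℕ → E | ∀ i ≤ n, ω i = f i} := by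
  have : {ω : ℕ → E | ∀ i ≤ n, ω i = f i}
      = ⋂ i ∈ Set.Iic n, (fun ω : ℕ → E => ω i) ⁻¹' {f i} := by
    ext ω
    simp [Set.mem_iInter, Set.mem_Iic]
  rw [this]
  exact MeasurableSet.biInter (Set.to_countable _)
    (fun i _ => (measurable_pi_apply i) (measurableSet_singleton _))

lemma single_measurable (n : ℕ) (v : E) :
    MeasurableSet {ω : ℕ → E | ω n = v} :=
  (measurable_pi_apply n) (measurableSet_singleton _)

lemma marg_eq (hP : IsChainLaw P ν κ) (n : ℕ) (v : E) :
    P {ω | ω n = v} = ∑' g : Fin n → E,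
      ν (extPath n g v 0) * ∏ i ∈ Finset.range n,
        κ (extPath n g v i) (extPath n g v (i + 1)) := by
  have hset : {ω : ℕ → E | ω n = v}
      = ⋃ g : Fin n → E, {ω : ℕ → E | ∀ i ≤ n, ω i = extPath n g v i} := by
    ext ω
    simp only [Set.mem_setOf_eq, Set.mem_iUnion]
    constructor
    · intro h
      refine ⟨fun i => ω i, fun i hi => ?_⟩
      by_cases hlt : i < n
      · rw [extPath_lt _ _ hlt]
      · have : i = n := by omega
        subst this
        rw [extPath_ge _ _ hlt, h]
    · rintro ⟨g, hg⟩
      have := hg n le_rfl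
      rwa [extPath_ge _ _ (lt_irrefl n)] at this
  have hdisj : Pairwise (Function.onFun Disjoint
      (fun g : Fin n → E => {ω : ℕ → E | ∀ i ≤ n, ω i = extPath n g v i})) := by
    intro g g' hgg
    rw [Function.onFun, Set.disjoint_left]
    intro ω hω hω'
    apply hgg
    funext i
    have h1 := hω i (le_of_lt i.isLt)
    have h2 := hω' i (le_of_lt i.isLt)
    rw [extPath_lt _ _ i.isLt] at h1 h2
    exact h1.symm.trans h2
  rw [hset, measure_iUnion hdisj (fun g => cyl_measurable n _)]
  exact tsum_congr fun g => hP.2 n (extPath n g v)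

lemma marg_zero (hP : IsChainLaw P ν κ) (v : E) :
    P {ω | ω 0 = v} = ν v := by
  have h := hP.2 0 (fun _ => v)
  simp only [Finset.range_zero, Finset.prod_empty, mul_one] at h
  have hset : {ω : ℕ → E | ∀ i ≤ 0, ω i = v} = {ω : ℕ → E | ω 0 = v} := by
    ext ω
    simp only [Set.mem_setOf_eq, Nat.le_zero]
    constructor
    · intro h'; exact h' 0 rfl
    · rintro h' i rfl; exact h'
  rwa [hset] at h

lemma marg_succ (hP : IsChainLaw P ν κ) (n : ℕ) (w : E) :
    P {ω | ω (n+1) = w} = ∑' v : E, P {ω | ω n = v} * κ v w := by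
  rw [marg_eq hP (n+1) w]
  rw [← Equiv.tsum_eq (snocE n E) (fun h => ν (extPath (n+1) h w 0) *
    ∏ i ∈ Finset.range (n+1), κ (extPath (n+1) h w i) (extPath (n+1) h w (i + 1)))]
  have hterm : ∀ (g : Fin n → E) (v : E),
      (fun h => ν (extPath (n+1) h w 0) *
        ∏ i ∈ Finset.range (n+1), κ (extPath (n+1) h w i) (extPath (n+1) h w (i + 1)))
          (snocE n E (g, v))
      = (ν (extPath n g v 0) * ∏ i ∈ Finset.range n,
          κ (extPath n g v i) (extPath n g v (i + 1))) * κ v w := by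
    intro g v
    have hsn : (snocE n E) (g, v) = Fin.snoc g v := rfl
    rw [hsn]
    dsimp only
    rw [Finset.prod_range_succ]
    have h0 : extPath (n+1) (Fin.snoc g v) w 0 = extPath n g v 0 :=
      extPath_snoc g v w (Nat.zero_le n)
    have hprod : ∏ i ∈ Finset.range n,
        κ (extPath (n+1) (Fin.snoc g v) w i) (extPath (n+1) (Fin.snoc g v) w (i + 1))
        = ∏ i ∈ Finset.range n, κ (extPath n g v i) (extPath n g v (i + 1)) := by
      apply Finset.prod_congr rfl
      intro i hi
      have hi' := Finset.mem_range.mp hi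
      rw [extPath_snoc g v w (by omega : i ≤ n), extPath_snoc g v w (by omega : i + 1 ≤ n)]
    have hn : extPath (n+1) (Fin.snoc g v) w n = extPath n g v n :=
      extPath_snoc g v w le_rfl
    have hn2 : extPath n g v n = v := extPath_ge _ _ (lt_irrefl n)
    have hn3 : extPath (n+1) (Fin.snoc g v) w (n+1) = w :=
      extPath_ge _ _ (lt_irrefl (n+1))
    rw [h0, hprod, hn, hn2, hn3, mul_assoc]
  calc ∑' (p : (Fin n → E) × E), (fun h => ν (extPath (n+1) h w 0) *
        ∏ i ∈ Finset.range (n+1), κ (extPath (n+1) h w i) (extPath (n+1) h w (i + 1)))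
          (snocE n E p)
      = ∑' (p : (Fin n → E) × E), (ν (extPath n p.1 p.2 0) * ∏ i ∈ Finset.range n,
          κ (extPath n p.1 p.2 i) (extPath n p.1 p.2 (i + 1))) * κ p.2 w := by
        apply tsum_congr
        rintro ⟨g, v⟩
        exact hterm g v
    _ = ∑' (v : E) (g : Fin n → E), (ν (extPath n g v 0) * ∏ i ∈ Finset.range n,
          κ (extPath n g v i) (extPath n g v (i + 1))) * κ v w := by
        rw [ENNReal.tsum_prod']
        exact ENNReal.tsum_comm
    _ = ∑' v : E, P {ω | ω n = v} * κ v w := by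
        apply tsum_congr
        intro v
        rw [ENNReal.tsum_mul_right, ← marg_eq hP n v]

end Meas

/-- Conditional uniformity of the particle system given its counts (Proposition
`prop-inter`(2)): if `(V_n)` is the Markov chain with kernel `κ̂` and initial law
`μ_{B(0)}`, then for every `n` and every coloring `v`,
`P(V_n = v)·|C_{Φ(v)}| = P(Φ(V_n) = Φ(v))`; i.e. conditionally on its count vector,
`V_n` is uniformly distributed on the colorings with that count vector. -/
theorem conditional_uniformity {c : ℕ} [NeZero c] (p : ℕ → ℕ → ℝ≥0∞)
    (hp : ∀ l, 1 ≤ l → p l 0 = 0 ∧ (Function.support (p l)).Finite ∧ ∑' b, p l b = 1)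
    (B0 : Fin c → ℕ) (hB0 : 1 ≤ ∑ u, B0 u)
    (P : Measure (ℕ → Coloring c))
    (hP : IsChainLaw P (unifMass B0) (particleKernel p)) :
    ∀ (n : ℕ) (v : Coloring c),
      P {ω | ω n = v} * ((colorings v.1 (countVec v.2)).card : ℝ≥0∞)
        = P {ω | countVec (ω n).2 = countVec v.2} := by
  classical
  have hconst : ∀ (n : ℕ) (l : ℕ) (x y : Fin l → Fin c), countVec x = countVec y →
      P {ω | ω n = ⟨l, x⟩} = P {ω | ω n = ⟨l, y⟩} := by
    intro n
    induction n with
    | zero =>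
      intro l x y h
      refine (marg_zero hP _).trans (Eq.trans ?_ (marg_zero hP _).symm)
      show (if countVec x = B0 then (((colorings l B0).card : ℝ≥0∞))⁻¹ else 0)
        = (if countVec y = B0 then (((colorings l B0).card : ℝ≥0∞))⁻¹ else 0)
      rw [h]
    | succ n ih =>
      intro l x y h
      refine (marg_succ hP _ _).trans (Eq.trans ?_ (marg_succ hP _ _).symm)
      exact step_const p (fun V => P {ω | ω n = V}) (fun l' a b hab => ih l' a b hab) x y h
  intro n v
  obtain ⟨m, w⟩ := v
  dsimp only
  have hset : {ω : ℕ → Coloring c | countVec (ω n).2 = countVec w}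
      = ⋃ x ∈ (colorings m (countVec w) : Finset (Fin m → Fin c)),
          {ω : ℕ → Coloring c | ω n = ⟨m, x⟩} := by
    ext ω
    simp only [Set.mem_setOf_eq, Set.mem_iUnion]
    constructor
    · intro h
      rcases hωn : ω n with ⟨l', y⟩
      rw [hωn] at h
      replace h : countVec y = countVec w := h
      have hl : l' = m := by
        have h1 := sum_countVec y
        have h2 := sum_countVec w
        rw [h] at h1
        omega
      subst hl
      exact ⟨y, Finset.mem_filter.mpr ⟨Finset.mem_univ _, h⟩, rfl⟩
    · rintro ⟨x, hx, hωn⟩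
      have hx' : countVec x = countVec w := (Finset.mem_filter.mp hx).2
      have : ω n = ⟨m, x⟩ := hωn
      show countVec (ω n).2 = countVec w
      rw [this]
      exact hx'
  rw [hset]
  have hdisj : Set.PairwiseDisjoint (↑(colorings m (countVec w)))
      (fun x : Fin m → Fin c => {ω : ℕ → Coloring c | ω n = ⟨m, x⟩}) := by
    intro x hx y hy hxy
    rw [Function.onFun, Set.disjoint_left]
    intro ω hω hω'
    apply hxy
    have heq : (⟨m, x⟩ : Coloring c) = ⟨m, y⟩ := hω.symm.trans hω'
    exact eq_of_heq (Sigma.mk.inj_iff.mp heq).2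
  rw [measure_biUnion_finset hdisj (fun x _ => single_measurable n _)]
  have hsum : ∑ x ∈ colorings m (countVec w), P {ω | ω n = ⟨m, x⟩}
      = ∑ _x ∈ colorings m (countVec w), P {ω | ω n = ⟨m, w⟩} := by
    apply Finset.sum_congr rfl
    intro x hx
    exact hconst n m x w (Finset.mem_filter.mp hx).2
  rw [hsum, Finset.sum_const, nsmul_eq_mul, mul_comm]
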